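/- Let Π be a finite index set of size d, let a, b : Π → ℝ, and define the empirical CDFs F̂(x) = (1/d)·#{π ∈ Π : a_π < x} and F̃(x) = (1/d)·#{π ∈ Π : b_π < x}. Let F : ℝ → ℝ be Lipschitz with constant D ≥ 0, let δ₁ ≥ 0 and δ₂ > 0, and assume sup_{x ∈ ℝ} |F̃(x) − F(x)| ≤ δ₁ and (1/d)·Σ_{π ∈ Π} (a_π − b_π)² ≤ δ₂². Then sup_{x ∈ ℝ} |F̂(x) − F̃(x)| ≤ 2δ₁ + δ₂ + 2D·√δ₂. -/

import Mathlib

open Finset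

/-- Inequality (13) from Step 1 of the proof of Theorem 1: if the empirical CDF `F̃`
of the oracle scores `b` is uniformly within `δ₁` of a `D`-Lipschitz `F`, and the mean
squared discrepancy between the approximate scores `a` and the oracle scores `b` is
at most `δ₂²`, then the empirical CDF `F̂` of the approximate scores is uniformly
within `2δ₁ + δ₂ + 2D√δ₂` of `F̃`. -/
theorem empirical_cdf_uniform_bound
    {ι : Type*} [Fintype ι] (d : ℕ) (hd : Fintype.card ι = d)
    (a b : ι → ℝ)
    (Fhat Ftil : ℝ → ℝ)
    (hFhat : ∀ x, Fhat x = ((Finset.univ.filter fun π : ι => a π < x).card : ℝ) / d)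
    (hFtil : ∀ x, Ftil x = ((Finset.univ.filter fun π : ι => b π < x).card : ℝ) / d)
    (F : ℝ → ℝ) (D : ℝ) (hD : 0 ≤ D)
    (hF : ∀ x y : ℝ, |F x - F y| ≤ D * |x - y|)
    (δ₁ δ₂ : ℝ) (hδ₁ : 0 ≤ δ₁) (hδ₂ : 0 < δ₂)
    (h1 : ∀ x : ℝ, |Ftil x - F x| ≤ δ₁)
    (h2 : (∑ π : ι, (a π - b π) ^ 2) / d ≤ δ₂ ^ 2) :
    ∀ x : ℝ, |Fhat x - Ftil x| ≤ 2 * δ₁ + δ₂ + 2 * D * Real.sqrt δ₂ := by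
  intro x
  classical
  have hε0 : 0 < Real.sqrt δ₂ := Real.sqrt_pos.mpr hδ₂
  set ε := Real.sqrt δ₂ with hεdef
  have hε2 : ε ^ 2 = δ₂ := Real.sq_sqrt hδ₂.le
  rcases Nat.eq_zero_or_pos d with hd0 | hdpos
  · simp only [hFhat, hFtil, hd0, Nat.cast_zero, div_zero, sub_zero, abs_zero]
    positivity
  have hdR : (0:ℝ) < d := by exact_mod_cast hdpos
  -- Chebyshev bound on the number of large discrepancies
  set S := Finset.univ.filter (fun π : ι => ε ≤ |a π - b π|) with hSdef
  have hScard : (S.card : ℝ) ≤ d * δ₂ := by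
    have hsum : (S.card : ℝ) * δ₂ ≤ ∑ π ∈ S, (a π - b π) ^ 2 := by
      calc (S.card : ℝ) * δ₂ = ∑ _π ∈ S, δ₂ := by
            rw [Finset.sum_const, nsmul_eq_mul]
        _ ≤ ∑ π ∈ S, (a π - b π) ^ 2 := by
            apply Finset.sum_le_sum
            intro π hπ
            have h := (Finset.mem_filter.mp hπ).2
            have : ε ^ 2 ≤ |a π - b π| ^ 2 := by
              apply pow_le_pow_left₀ hε0.le h
            rwa [hε2, sq_abs] at this
    have hsum2 : ∑ π ∈ S, (a π - b π) ^ 2 ≤ ∑ π : ι, (a π - b π) ^ 2 :=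
      Finset.sum_le_sum_of_subset_of_nonneg (Finset.subset_univ S)
        (fun π _ _ => sq_nonneg _)
    have htot : ∑ π : ι, (a π - b π) ^ 2 ≤ d * δ₂ ^ 2 := by
      rw [div_le_iff₀ hdR] at h2; linarith
    have : (S.card : ℝ) * δ₂ ≤ (d * δ₂) * δ₂ := by nlinarith
    exact le_of_mul_le_mul_right this hδ₂
  -- counting inclusions
  have hup : ((Finset.univ.filter fun π : ι => a π < x).card : ℝ)
      ≤ ((Finset.univ.filter fun π : ι => b π < x + ε).card : ℝ) + S.card := by
    have hsub : (Finset.univ.filter fun π : ι => a π < x)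
        ⊆ (Finset.univ.filter fun π : ι => b π < x + ε) ∪ S := by
      intro π hπ
      have hax := (Finset.mem_filter.mp hπ).2
      by_cases hb : ε ≤ |a π - b π|
      · exact Finset.mem_union_right _ (Finset.mem_filter.mpr ⟨Finset.mem_univ _, hb⟩)
      · push_neg at hb
        have := abs_lt.mp hb
        exact Finset.mem_union_left _
          (Finset.mem_filter.mpr ⟨Finset.mem_univ _, by linarith [this.1]⟩)
    have := Finset.card_le_card hsub
    have h2 := Finset.card_union_le
      (Finset.univ.filter fun π : ι => b π < x + ε) S
    exact_mod_cast this.trans h2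
  have hdown : ((Finset.univ.filter fun π : ι => b π < x - ε).card : ℝ)
      ≤ ((Finset.univ.filter fun π : ι => a π < x).card : ℝ) + S.card := by
    have hsub : (Finset.univ.filter fun π : ι => b π < x - ε)
        ⊆ (Finset.univ.filter fun π : ι => a π < x) ∪ S := by
      intro π hπ
      have hbx := (Finset.mem_filter.mp hπ).2
      by_cases hb : ε ≤ |a π - b π|
      · exact Finset.mem_union_right _ (Finset.mem_filter.mpr ⟨Finset.mem_univ _, hb⟩)
      · push_neg at hb
        have := abs_lt.mp hb
        exact Finset.mem_union_left _
          (Finset.mem_filter.mpr ⟨Finset.mem_univ _, by linarith [this.2]⟩)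
    have := Finset.card_le_card hsub
    have h2 := Finset.card_union_le
      (Finset.univ.filter fun π : ι => a π < x) S
    exact_mod_cast this.trans h2
  -- translate to CDFs
  have hFup : Fhat x ≤ Ftil (x + ε) + δ₂ := by
    rw [hFhat, hFtil]
    rw [div_add' _ _ _ hdR.ne', div_le_div_iff₀ hdR hdR]
    nlinarith [hScard]
  have hFdown : Ftil (x - ε) - δ₂ ≤ Fhat x := by
    rw [hFhat, hFtil]
    rw [div_sub' hdR.ne', div_le_div_iff₀ hdR hdR]
    nlinarith [hScard]
  -- Lipschitz / uniform approximation steps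
  have hL1 : |F (x + ε) - F x| ≤ D * ε := by
    have := hF (x + ε) x
    simpa [abs_of_nonneg hε0.le] using this
  have hL2 : |F (x - ε) - F x| ≤ D * ε := by
    have := hF (x - ε) x
    have h : |x - ε - x| = ε := by
      rw [show x - ε - x = -ε by ring, abs_neg, abs_of_nonneg hε0.le]
    rwa [h] at this
  have ha1 := abs_le.mp (h1 (x + ε))
  have ha2 := abs_le.mp (h1 (x - ε))
  have ha3 := abs_le.mp (h1 x)
  have hb1 := abs_le.mp hL1
  have hb2 := abs_le.mp hL2
  have hDε : 0 ≤ D * ε := mul_nonneg hD hε0.le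
  rw [abs_le]
  constructor
  · linarith [ha2.1, ha2.2, ha3.1, ha3.2, hb2.1, hb2.2, hFdown, hDε]
  · linarith [ha1.1, ha1.2, ha3.1, ha3.2, hb1.1, hb1.2, hFup, hDε]
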